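/- (Lemma 3.6, co-area formula on an edge) Let L > 0 and let h : [0,L] → ℝ be continuously differentiable on [0,L]. For t ∈ ℝ set Ω_h(t) = {x ∈ [0,L] : h(x) > t}. Then ∫₀^L |h′(x)| dx = ∫_ℝ #(∂Ω_h(t) ∩ (0,L)) dt, where ∂ denotes the topological boundary in ℝ and # denotes cardinality (possibly infinite, the integral taken in [0,∞]). -/

import Mathlib

open scoped Classical ENNReal
open MeasureTheory

noncomputable section

/-- A real function on `[0, L]` which is continuous and piecewise continuously
differentiable: there is a finite partition `0 = x 0 < x 1 < ... < x n = L` such that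
on each closed piece the function has a continuous derivative. -/
def PiecewiseC1 (f : ℝ → ℝ) (L : ℝ) : Prop :=
  ContinuousOn f (Set.Icc 0 L) ∧
  ∃ (n : ℕ) (x : Fin (n + 1) → ℝ), x 0 = 0 ∧ x (Fin.last n) = L ∧ StrictMono x ∧
    ∀ i : Fin n, ∃ g : ℝ → ℝ,
      ContinuousOn g (Set.Icc (x i.castSucc) (x i.succ)) ∧
      ∀ t ∈ Set.Icc (x i.castSucc) (x i.succ),
        HasDerivWithinAt f (g t) (Set.Icc (x i.castSucc) (x i.succ)) t

/-- The underlying (unoriented) simple graph of a set of edges `E` with endpoint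
map `ends : E → V × V`. -/
def graphOf {V E : Type} (ends : E → V × V) : SimpleGraph V :=
  SimpleGraph.fromRel fun u v => ∃ e, ends e = (u, v)

/-- A metric graph: a connected, locally finite, simple combinatorial graph with
countably infinite vertex and edge sets, each edge having a finite positive length.
Each edge carries an (auxiliary) orientation given by `ends`. -/
structure MetricGraph : Type 1 where
  V : Type
  E : Type
  countV : Countable V
  infV : Infinite V
  countE : Countable E
  infE : Infinite E
  ends : E → V × V
  len : E → ℝ
  len_pos : ∀ e, 0 < len e
  no_loops : ∀ e, (ends e).1 ≠ (ends e).2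
  no_multi : Function.Injective fun e => Sym2.mk (ends e)
  locfin : ∀ v, {e | (ends e).1 = v ∨ (ends e).2 = v}.Finite
  conn : (graphOf ends).Connected

namespace MetricGraph

/-- The underlying simple graph. -/
def graph (Γ : MetricGraph) : SimpleGraph Γ.V := graphOf Γ.ends

/-- The star of a vertex: the set of edges incident to it. -/
def star (Γ : MetricGraph) (v : Γ.V) : Set Γ.E :=
  {e | (Γ.ends e).1 = v ∨ (Γ.ends e).2 = v}

/-- Combinatorial degree of a vertex. -/
def degree (Γ : MetricGraph) (v : Γ.V) : ℕ := (Γ.locfin v).toFinset.card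

/-- The vertices of a (finite) subgraph given by a finite set of edges. -/
def vertsOf (Γ : MetricGraph) (F : Finset Γ.E) : Finset Γ.V :=
  F.image (fun e => (Γ.ends e).1) ∪ F.image fun e => (Γ.ends e).2

/-- The degree of a vertex inside the subgraph given by the edge set `F`. -/
def degIn (Γ : MetricGraph) (F : Finset Γ.E) (v : Γ.V) : ℕ :=
  (F.filter fun e => (Γ.ends e).1 = v ∨ (Γ.ends e).2 = v).card

/-- Connectedness of the subgraph spanned by the edge set `F`. -/
def SubConn (Γ : MetricGraph) (F : Finset Γ.E) : Prop :=
  ((SimpleGraph.fromRel fun u v => ∃ e ∈ F, Γ.ends e = (u, v)).induce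
    (↑(Γ.vertsOf F) : Set Γ.V)).Connected

/-- A finite connected subgraph (with at least one edge), given by its edge set. -/
def IsFinSubgraph (Γ : MetricGraph) (F : Finset Γ.E) : Prop :=
  F.Nonempty ∧ Γ.SubConn F

/-- The boundary of a finite subgraph with respect to `Γ`: the vertices whose degree
in the subgraph is strictly smaller than the degree in `Γ`. -/
def bdry (Γ : MetricGraph) (F : Finset Γ.E) : Finset Γ.V :=
  (Γ.vertsOf F).filter fun v => Γ.degIn F v < Γ.degree v

/-- `deg (∂_G G̃)`. -/
def degBdry (Γ : MetricGraph) (F : Finset Γ.E) : ℝ :=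
  ∑ v ∈ Γ.bdry F, (Γ.degIn F v : ℝ)

/-- The total length (Lebesgue measure) of a finite subgraph. -/
def mes (Γ : MetricGraph) (F : Finset Γ.E) : ℝ := ∑ e ∈ F, Γ.len e

/-- The isoperimetric (Cheeger) constant of a metric graph. -/
def alpha (Γ : MetricGraph) : ℝ :=
  sInf {r : ℝ | ∃ F : Finset Γ.E, Γ.IsFinSubgraph F ∧ r = Γ.degBdry F / Γ.mes F}

/-- The isoperimetric constant at infinity, as an element of `[0,∞]`. -/
def alphaEssEnn (Γ : MetricGraph) : ℝ≥0∞ :=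
  ⨆ W : Finset Γ.E, ⨅ (F : Finset Γ.E) (_ : Γ.IsFinSubgraph F ∧ Disjoint F W),
    ENNReal.ofReal (Γ.degBdry F / Γ.mes F)

/-- The vertex weight `m(v) = Σ_{e ∈ E_v} |e|`. -/
def mweight (Γ : MetricGraph) (v : Γ.V) : ℝ :=
  ∑ e ∈ (Γ.locfin v).toFinset, Γ.len e

/-- The set of boundary edges of a vertex set: edges with exactly one endpoint in `X`. -/
def Eb (Γ : MetricGraph) (X : Set Γ.V) : Set Γ.E :=
  {e | Xor' ((Γ.ends e).1 ∈ X) ((Γ.ends e).2 ∈ X)}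

/-- The discrete isoperimetric constant of a vertex set `U`. -/
def alphaD (Γ : MetricGraph) (U : Set Γ.V) : ℝ :=
  sInf {r : ℝ | ∃ X : Finset Γ.V, ↑X ⊆ U ∧ X.Nonempty ∧
    r = ((Γ.Eb ↑X).ncard : ℝ) / ∑ v ∈ X, Γ.mweight v}

/-- The discrete isoperimetric constant at infinity, as an element of `[0,∞]`. -/
def alphaDEssEnn (Γ : MetricGraph) : ℝ≥0∞ :=
  ⨆ X : Finset Γ.V, ENNReal.ofReal (Γ.alphaD (↑X : Set Γ.V)ᶜ)

/-- The combinatorial isoperimetric constant. -/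
def alphaComb (Γ : MetricGraph) : ℝ :=
  sInf {r : ℝ | ∃ X : Finset Γ.V, X.Nonempty ∧
    r = ((Γ.Eb ↑X).ncard : ℝ) / ∑ v ∈ X, (Γ.degree v : ℝ)}

/-- `ℓ*(G) = sup of edge lengths`. -/
def ellSup (Γ : MetricGraph) : ℝ := sSup (Set.range Γ.len)

/-- `ℓ_*(G) = inf of edge lengths`. -/
def ellInf (Γ : MetricGraph) : ℝ := sInf (Set.range Γ.len)

/-- `ℓ*(G)` as an element of `[0,∞]`. -/
def ellSupEnn (Γ : MetricGraph) : ℝ≥0∞ := ⨆ e : Γ.E, ENNReal.ofReal (Γ.len e)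

/-- `ℓ*_ess(G) = inf_F sup_{e ∉ F} |e|` as an element of `[0,∞]`. -/
def ellSupEssEnn (Γ : MetricGraph) : ℝ≥0∞ :=
  ⨅ W : Finset Γ.E, ⨆ e : {e : Γ.E // e ∉ W}, ENNReal.ofReal (Γ.len (e : Γ.E))

/-- Outgoing edges at a vertex (for the fixed orientation). -/
def plusE (Γ : MetricGraph) (v : Γ.V) : Set Γ.E := {e | (Γ.ends e).1 = v}

/-- Incoming edges at a vertex (for the fixed orientation). -/
def minusE (Γ : MetricGraph) (v : Γ.V) : Set Γ.E := {e | (Γ.ends e).2 = v}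

/-- The curvature `K(v) = ((#E_v⁺ − #E_v⁻)/#E_v⁺) · inf_{e ∈ E_v⁺} 1/|e|`. -/
def Kcurv (Γ : MetricGraph) (v : Γ.V) : ℝ :=
  (((Γ.plusE v).ncard : ℝ) - ((Γ.minusE v).ncard : ℝ)) / ((Γ.plusE v).ncard : ℝ) *
    sInf ((fun e => 1 / Γ.len e) '' Γ.plusE v)

/-- The combinatorial curvature `K_comb(v) = 1 − #E_v⁻/#E_v⁺`. -/
def Kcomb (Γ : MetricGraph) (v : Γ.V) : ℝ :=
  1 - ((Γ.minusE v).ncard : ℝ) / ((Γ.plusE v).ncard : ℝ)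

/-- `liminf_{v ∈ V} K(v) = sup over finite W of inf_{v ∉ W} K(v)`, in `[0,∞]`. -/
def KcurvEssEnn (Γ : MetricGraph) : ℝ≥0∞ :=
  ⨆ W : Finset Γ.V, ⨅ v : {v : Γ.V // v ∉ W}, ENNReal.ofReal (Γ.Kcurv (v : Γ.V))

/-- `liminf_{v ∈ V} K_comb(v) = sup over finite W of inf_{v ∉ W} K_comb(v)`. -/
def KcombLiminf (Γ : MetricGraph) : ℝ :=
  sSup (Set.range fun W : Finset Γ.V => sInf (Γ.Kcomb '' (↑W : Set Γ.V)ᶜ))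

/-- The value of an edgewise function at an endpoint of an edge. -/
def endVal (Γ : MetricGraph) (f : Γ.E → ℝ → ℝ) (e : Γ.E) (v : Γ.V) : ℝ :=
  if (Γ.ends e).1 = v then f e 0 else f e (Γ.len e)

/-- A test function on the metric graph `Γ`: a family of continuous, piecewise `C¹`
functions on the edges, matching at the vertices, vanishing on all but finitely
many edges. -/
structure TestFun (Γ : MetricGraph) where
  f : Γ.E → ℝ → ℝ
  piecewise : ∀ e, PiecewiseC1 (f e) (Γ.len e)
  vertexCont : ∀ e e' : Γ.E, ∀ v : Γ.V, e ∈ Γ.star v → e' ∈ Γ.star v →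
    Γ.endVal f e v = Γ.endVal f e' v
  finSupp : {e : Γ.E | ∃ x ∈ Set.Icc 0 (Γ.len e), f e x ≠ 0}.Finite

/-- `‖f‖² = Σ_e ∫₀^{|e|} f_e(x)² dx`. -/
def TestFun.normSq {Γ : MetricGraph} (φ : TestFun Γ) : ℝ :=
  ∑ᶠ e : Γ.E, ∫ x in (0:ℝ)..Γ.len e, (φ.f e x) ^ 2

/-- `‖f′‖² = Σ_e ∫₀^{|e|} f_e′(x)² dx`. -/
def TestFun.energySq {Γ : MetricGraph} (φ : TestFun Γ) : ℝ :=
  ∑ᶠ e : Γ.E, ∫ x in (0:ℝ)..Γ.len e, (deriv (φ.f e) x) ^ 2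

/-- A test function is nonzero if it does not vanish identically on the graph. -/
def TestFun.Nonzero {Γ : MetricGraph} (φ : TestFun Γ) : Prop :=
  ∃ e : Γ.E, ∃ x ∈ Set.Icc 0 (Γ.len e), φ.f e x ≠ 0

/-- The bottom of the spectrum of the Kirchhoff Laplacian, via the variational
(Rayleigh quotient) characterization. -/
def lambda0 (Γ : MetricGraph) : ℝ :=
  sInf {r : ℝ | ∃ φ : TestFun Γ, φ.Nonzero ∧ r = φ.energySq / φ.normSq}

end MetricGraph

/-- A weighted graph `(V, m, b)`: a connected, locally finite, simple combinatorial
graph with countably infinite vertex and edge sets, an edge weight `b` and a vertex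
weight `m`. -/
structure WeightedGraph : Type 1 where
  V : Type
  E : Type
  countV : Countable V
  infV : Infinite V
  countE : Countable E
  infE : Infinite E
  ends : E → V × V
  no_loops : ∀ e, (ends e).1 ≠ (ends e).2
  no_multi : Function.Injective fun e => Sym2.mk (ends e)
  locfin : ∀ v, {e | (ends e).1 = v ∨ (ends e).2 = v}.Finite
  conn : (graphOf ends).Connected
  b : E → ℝ
  b_pos : ∀ e, 0 < b e
  m : V → ℝ
  m_pos : ∀ v, 0 < m v

namespace WeightedGraph

/-- An edge weight `d` is intrinsic if `Σ_{e ∈ E_v} d(e)² b(e) ≤ m(v)` for all `v`. -/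
def Intrinsic (Γ : WeightedGraph) (d : Γ.E → ℝ) : Prop :=
  ∀ v, ∑ e ∈ (Γ.locfin v).toFinset, d e ^ 2 * Γ.b e ≤ Γ.m v

/-- The boundary edges of a vertex set: edges with exactly one endpoint in `X`. -/
def Eb (Γ : WeightedGraph) (X : Set Γ.V) : Set Γ.E :=
  {e | Xor' ((Γ.ends e).1 ∈ X) ((Γ.ends e).2 ∈ X)}

/-- The discrete isoperimetric constant `α_d(U)` with respect to the weight `d`. -/
def alphaD (Γ : WeightedGraph) (d : Γ.E → ℝ) (U : Set Γ.V) : ℝ :=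
  sInf {r : ℝ | ∃ X : Finset Γ.V, ↑X ⊆ U ∧ X.Nonempty ∧
    r = (∑ᶠ e ∈ Γ.Eb ↑X, d e * Γ.b e) / ∑ v ∈ X, Γ.m v}

/-- The discrete isoperimetric constant at infinity, in `[0,∞]`. -/
def alphaDEssEnn (Γ : WeightedGraph) (d : Γ.E → ℝ) : ℝ≥0∞ :=
  ⨆ X : Finset Γ.V, ENNReal.ofReal (Γ.alphaD d (↑X : Set Γ.V)ᶜ)

/-- The energy form `Q(u) = Σ_e b(e) (u(e_i) − u(e_0))²`. -/
def Q (Γ : WeightedGraph) (u : Γ.V → ℝ) : ℝ :=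
  ∑ᶠ e : Γ.E, Γ.b e * (u (Γ.ends e).2 - u (Γ.ends e).1) ^ 2

/-- The squared norm `Σ_v m(v) u(v)²`. -/
def normSqD (Γ : WeightedGraph) (u : Γ.V → ℝ) : ℝ :=
  ∑ᶠ v : Γ.V, Γ.m v * u v ^ 2

/-- The bottom of the spectrum of the Friedrichs extension of the weighted Laplacian,
via the variational characterization over finitely supported functions. -/
def lambda0 (Γ : WeightedGraph) : ℝ :=
  sInf {r : ℝ | ∃ u : Γ.V → ℝ, (Function.support u).Finite ∧ u ≠ 0 ∧
    r = Γ.Q u / Γ.normSqD u}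

/-- The bottom of the essential spectrum of the Friedrichs extension, via Glazman's
decomposition principle, in `[0,∞]`. -/
def lambda0EssEnn (Γ : WeightedGraph) : ℝ≥0∞ :=
  ⨆ X : Finset Γ.V, ⨅ (u : Γ.V → ℝ)
    (_ : (Function.support u).Finite ∧ u ≠ 0 ∧ ∀ v ∈ X, u v = 0),
      ENNReal.ofReal (Γ.Q u / Γ.normSqD u)

end WeightedGraph

end

/-- **Lemma 3.6 (co-area formula on an edge).** Let `L > 0` and `h : [0,L] → ℝ`
continuously differentiable on `[0,L]` (with continuous derivative `h'`). Then
`∫₀^L |h′(x)| dx = ∫_ℝ #(∂Ω_h(t) ∩ (0,L)) dt`, where `Ω_h(t) = {x ∈ [0,L] : h(x) > t}`,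
`∂` is the topological boundary in `ℝ` and `#` the (possibly infinite) cardinality. -/
theorem coarea_formula_edge (L : ℝ) (hL : 0 < L) (h h' : ℝ → ℝ)
    (hc : ContinuousOn h' (Set.Icc 0 L))
    (hd : ∀ x ∈ Set.Icc 0 L, HasDerivWithinAt h (h' x) (Set.Icc 0 L) x) :
    ENNReal.ofReal (∫ x in (0:ℝ)..L, |h' x|) =
      ∫⁻ t : ℝ,
        ((frontier {x : ℝ | x ∈ Set.Icc 0 L ∧ t < h x} ∩ Set.Ioo 0 L).encard : ℝ≥0∞) := by
  
  classical
  have hIoosub : Set.Ioo 0 L ⊆ Set.Icc 0 L := Set.Ioo_subset_Icc_self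
  have hcont : ContinuousOn h (Set.Icc 0 L) := fun x hx => (hd x hx).continuousWithinAt
  set U : Set ℝ := {x | x ∈ Set.Ioo 0 L ∧ h' x ≠ 0} with hUdef
  set Z : Set ℝ := {x | x ∈ Set.Ioo 0 L ∧ h' x = 0} with hZdef
  have hU : IsOpen U := by
    have : U = Set.Ioo 0 L ∩ h' ⁻¹' ({0}ᶜ) := rfl
    rw [this]
    exact (hc.mono hIoosub).isOpen_inter_preimage isOpen_Ioo (isOpen_compl_iff.2 isClosed_singleton)
  have hZmeas : MeasurableSet Z := by
    have : Z = Set.Ioo 0 L \ U := by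
      ext x; simp only [hUdef, hZdef, Set.mem_setOf_eq, Set.mem_diff]; tauto
    rw [this]
    exact measurableSet_Ioo.diff hU.measurableSet
  -- Sard: critical values are null
  have himZ : volume (h '' Z) = 0 := by
    apply addHaar_image_eq_zero_of_det_fderivWithin_eq_zero volume
      (f' := fun x => (1 : ℝ →L[ℝ] ℝ).smulRight (h' x))
    · intro x hx
      exact ((hd x (hIoosub hx.1)).mono (fun y hy => hIoosub hy.1)).hasFDerivWithinAt
    · intro x hx
      rw [ContinuousLinearMap.smulRight_one_eq_toSpanSingleton, ContinuousLinearMap.det_toSpanSingleton]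
      exact hx.2
  -- frontier identification for noncritical values
  have hfr : ∀ t : ℝ, t ∉ h '' Z →
      frontier {x : ℝ | x ∈ Set.Icc 0 L ∧ t < h x} ∩ Set.Ioo 0 L = {x | h x = t} ∩ U := by
    intro t ht
    set S := {x : ℝ | x ∈ Set.Icc 0 L ∧ t < h x} with hS
    ext x
    constructor
    · rintro ⟨hf, hx⟩
      have hxt : h x = t := by
        by_contra hne
        rcases lt_or_gt_of_ne hne with hlt | hgt
        · have hV : IsOpen (Set.Ioo 0 L ∩ h ⁻¹' Set.Iio t) :=
            (hcont.mono hIoosub).isOpen_inter_preimage isOpen_Ioo isOpen_Iio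
          have hxV : x ∈ Set.Ioo 0 L ∩ h ⁻¹' Set.Iio t := ⟨hx, hlt⟩
          have hVs : Set.Ioo 0 L ∩ h ⁻¹' Set.Iio t ⊆ Sᶜ := by
            rintro y ⟨hy1, hy2⟩ ⟨_, hy3⟩
            exact absurd hy3 (not_lt.2 hy2.le)
          have : x ∈ interior Sᶜ := interior_maximal hVs hV hxV
          rw [interior_compl] at this
          exact this hf.1
        · have hV : IsOpen (Set.Ioo 0 L ∩ h ⁻¹' Set.Ioi t) :=
            (hcont.mono hIoosub).isOpen_inter_preimage isOpen_Ioo isOpen_Ioi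
          have hxV : x ∈ Set.Ioo 0 L ∩ h ⁻¹' Set.Ioi t := ⟨hx, hgt⟩
          have hVs : Set.Ioo 0 L ∩ h ⁻¹' Set.Ioi t ⊆ S := by
            rintro y ⟨hy1, hy2⟩; exact ⟨hIoosub hy1, hy2⟩
          exact hf.2 (interior_maximal hVs hV hxV)
      exact ⟨hxt, hx, fun h0 => ht ⟨x, ⟨hx, h0⟩, hxt⟩⟩
    · rintro ⟨hxt, hx, hx0⟩
      replace hxt : h x = t := hxt
      have hda : HasDerivAt h (h' x) x :=
        (hd x (hIoosub hx)).hasDerivAt (Icc_mem_nhds hx.1 hx.2)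
      have hxS : x ∉ S := fun hS' => absurd hS'.2 (by simp [hxt])
      have hIooev : ∀ᶠ y in nhds x, y ∈ Set.Ioo 0 L := isOpen_Ioo.eventually_mem hx
      have hcl : x ∈ closure S := by
        rw [mem_closure_iff_frequently]
        have hslope := hasDerivAt_iff_tendsto_slope.1 hda
        rcases hx0.lt_or_gt with hneg | hpos
        · have hev : ∀ᶠ y in nhdsWithin x (Set.Iio x), slope h x y < 0 :=
            (hslope.eventually (eventually_lt_nhds hneg)).filter_mono
              (nhdsWithin_mono x (fun y hy => (ne_of_lt hy : y ≠ x)))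
          have hev2 : ∀ᶠ y in nhdsWithin x (Set.Iio x), y ∈ S := by
            filter_upwards [hev, eventually_nhdsWithin_of_eventually_nhds hIooev,
              self_mem_nhdsWithin] with y hy1 hy2 hy3
            have hyx : y - x < 0 := sub_neg.2 hy3
            have : 0 < h y - h x := by
              rw [slope_def_field] at hy1
              rcases div_neg_iff.1 hy1 with ⟨h1, h2⟩ | ⟨h1, h2⟩
              · linarith
              · linarith
            exact ⟨hIoosub hy2, by rw [hxt] at this; linarith⟩
          exact (hev2.frequently.filter_mono nhdsWithin_le_nhds)
        · have hev : ∀ᶠ y in nhdsWithin x (Set.Ioi x), 0 < slope h x y :=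
            (hslope.eventually (eventually_gt_nhds hpos)).filter_mono
              (nhdsWithin_mono x (fun y hy => (ne_of_gt hy : y ≠ x)))
          have hev2 : ∀ᶠ y in nhdsWithin x (Set.Ioi x), y ∈ S := by
            filter_upwards [hev, eventually_nhdsWithin_of_eventually_nhds hIooev,
              self_mem_nhdsWithin] with y hy1 hy2 hy3
            have hyx : 0 < y - x := sub_pos.2 hy3
            have : 0 < h y - h x := by
              rw [slope_def_field] at hy1
              rcases div_pos_iff.1 hy1 with ⟨h1, h2⟩ | ⟨h1, h2⟩
              · linarith
              · linarith
            exact ⟨hIoosub hy2, by rw [hxt] at this; linarith⟩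
          exact (hev2.frequently.filter_mono nhdsWithin_le_nhds)
      exact ⟨⟨hcl, fun hint => hxS (interior_subset hint)⟩, hx⟩
  -- connected components of U
  set C : Set (Set ℝ) := (fun q : ℚ => connectedComponentIn U (q : ℝ)) '' {q : ℚ | (q : ℝ) ∈ U}
    with hCdef
  have hCc : C.Countable := (Set.to_countable _).image _
  haveI : Countable ↥C := hCc.to_subtype
  have hmem : ∀ s ∈ C, ∀ x ∈ s, s = connectedComponentIn U x := by
    rintro s ⟨q, hq, rfl⟩ x hx
    exact connectedComponentIn_eq hx
  have hsub : ∀ s ∈ C, s ⊆ U := by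
    rintro s ⟨q, hq, rfl⟩; exact connectedComponentIn_subset U _
  have hopen : ∀ s ∈ C, IsOpen s := by
    rintro s ⟨q, hq, rfl⟩; exact hU.connectedComponentIn
  have hpre : ∀ s ∈ C, IsPreconnected s := by
    rintro s ⟨q, hq, rfl⟩; exact isPreconnected_connectedComponentIn
  have hunion : ⋃ i : ↥C, (i : Set ℝ) = U := by
    apply subset_antisymm
    · exact Set.iUnion_subset fun i => hsub _ i.2
    · intro x hx
      have hxc : x ∈ connectedComponentIn U x := mem_connectedComponentIn hx
      have hoc : IsOpen (connectedComponentIn U x) := hU.connectedComponentIn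
      obtain ⟨q, hq⟩ := Rat.denseRange_cast.exists_mem_open hoc ⟨x, hxc⟩
      have hqU : (q : ℝ) ∈ U := connectedComponentIn_subset U x hq
      have h2 : connectedComponentIn U (q : ℝ) = connectedComponentIn U x :=
        (connectedComponentIn_eq hq).symm
      refine Set.mem_iUnion.2 ⟨⟨_, ⟨q, hqU, rfl⟩⟩, ?_⟩
      show x ∈ connectedComponentIn U (q : ℝ)
      rw [h2]; exact hxc
  have hdisjC : ∀ i j : ↥C, i ≠ j → Disjoint (i : Set ℝ) (j : Set ℝ) := by
    intro i j hne
    rw [Set.disjoint_left]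
    intro x hxi hxj
    exact hne (Subtype.ext ((hmem _ i.2 x hxi).trans (hmem _ j.2 x hxj).symm))
  -- injectivity on each component
  have hinj : ∀ s ∈ C, Set.InjOn h s := by
    intro s hsC
    have hso := hopen s hsC
    have hsp := hpre s hsC
    have hssub : s ⊆ Set.Ioo 0 L := fun x hx => (hsub s hsC hx).1
    have hne : ∀ x ∈ s, h' x ≠ 0 := fun x hx => (hsub s hsC hx).2
    have hconv : Convex ℝ s := hsp.ordConnected.convex
    have hderiv : ∀ x ∈ s, deriv h x = h' x := fun x hx =>
      ((hd x (hIoosub (hssub hx))).hasDerivAt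
        (Icc_mem_nhds (hssub hx).1 (hssub hx).2)).deriv
    have hsign : (∀ x ∈ s, 0 < h' x) ∨ ∀ x ∈ s, h' x < 0 := by
      by_contra hcon
      push_neg at hcon
      obtain ⟨⟨a, ha, ha'⟩, b, hb, hb'⟩ := hcon
      have ha2 : h' a < 0 := (hne a ha).lt_of_le ha'
      have hb2 : 0 < h' b := (hne b hb).symm.lt_of_le hb'
      have : (0 : ℝ) ∈ h' '' s :=
        hsp.intermediate_value ha hb (hc.mono (hssub.trans hIoosub)) ⟨ha2.le, hb2.le⟩
      obtain ⟨x, hx, hx0⟩ := this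
      exact hne x hx hx0
    rcases hsign with hp | hn
    · exact (strictMonoOn_of_deriv_pos hconv (hcont.mono (hssub.trans hIoosub))
        (fun x hx => by
          rw [hso.interior_eq] at hx
          rw [hderiv x hx]; exact hp x hx)).injOn
    · exact (strictAntiOn_of_deriv_neg hconv (hcont.mono (hssub.trans hIoosub))
        (fun x hx => by
          rw [hso.interior_eq] at hx
          rw [hderiv x hx]; exact hn x hx)).injOn
  -- measurability of images
  have himg : ∀ s ∈ C, MeasurableSet (h '' s) := fun s hsC =>
    (((hpre s hsC).image h (hcont.mono ((hsub s hsC).trans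
      (Set.Subset.trans (fun x hx => hx.1) hIoosub))))).ordConnected.measurableSet
  -- change of variables on each component
  have hvol : ∀ s ∈ C, volume (h '' s) = ∫⁻ x in s, ENNReal.ofReal |h' x| := by
    intro s hsC
    have := lintegral_abs_det_fderiv_eq_addHaar_image volume
      (f' := fun x => (1 : ℝ →L[ℝ] ℝ).smulRight (h' x)) (hopen s hsC).measurableSet
      (fun x hx => ((hd x (hIoosub (hsub s hsC hx).1)).mono
        (fun y hy => hIoosub (hsub s hsC hy).1)).hasFDerivWithinAt) (hinj s hsC)
    rw [← this]
    simp only [ContinuousLinearMap.smulRight_one_eq_toSpanSingleton, ContinuousLinearMap.det_toSpanSingleton]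
  -- counting the level set
  have hcount : ∀ t : ℝ, (({x | h x = t} ∩ U).encard : ℝ≥0∞)
      = ∑' i : ↥C, (h '' (i : Set ℝ)).indicator (fun _ => (1 : ℝ≥0∞)) t := by
    intro t
    have hAsub : ∀ i : ↥C, ({x | h x = t} ∩ (i : Set ℝ)).Subsingleton := by
      intro i x hx y hy
      exact hinj _ i.2 hx.2 hy.2 (hx.1.trans hy.1.symm)
    have hAmeas : ∀ i : ↥C, MeasurableSet ({x | h x = t} ∩ (i : Set ℝ)) := fun i =>
      ((hAsub i).finite.countable).measurableSet
    have hA : {x | h x = t} ∩ U = ⋃ i : ↥C, ({x | h x = t} ∩ (i : Set ℝ)) := by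
      rw [← hunion, Set.inter_iUnion]
    have hdisj' : Pairwise (Function.onFun Disjoint
        fun i : ↥C => {x | h x = t} ∩ (i : Set ℝ)) := fun i j hne =>
      ((hdisjC i j hne).mono Set.inter_subset_right Set.inter_subset_right)
    have hAmeasU : MeasurableSet ({x | h x = t} ∩ U) := by
      rw [hA]; exact MeasurableSet.iUnion hAmeas
    have hcnt : ∀ i : ↥C, Measure.count ({x | h x = t} ∩ (i : Set ℝ))
        = (h '' (i : Set ℝ)).indicator (fun _ => (1 : ℝ≥0∞)) t := by
      intro i
      rw [Measure.count_apply (hAmeas i)]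
      by_cases htm : t ∈ h '' (i : Set ℝ)
      · obtain ⟨x, hxs, hxt⟩ := htm
        have : {y | h y = t} ∩ (i : Set ℝ) = {x} := by
          apply subset_antisymm
          · intro y hy
            exact hinj _ i.2 hy.2 hxs (hy.1.trans hxt.symm)
          · rintro y rfl
            exact ⟨hxt, hxs⟩
        rw [this, Set.encard_singleton,
          Set.indicator_of_mem (show t ∈ h '' (i : Set ℝ) from ⟨x, hxs, hxt⟩)]
        simp
      · have : {y | h y = t} ∩ (i : Set ℝ) = ∅ := by
          apply Set.eq_empty_of_forall_notMem
          rintro y ⟨hy1, hy2⟩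
          exact htm ⟨y, hy2, hy1⟩
        rw [this, Set.encard_empty, Set.indicator_of_notMem htm]
        simp
    calc (({x | h x = t} ∩ U).encard : ℝ≥0∞)
        = Measure.count ({x | h x = t} ∩ U) := by
          rw [Measure.count_apply hAmeasU]
      _ = ∑' i : ↥C, Measure.count ({x | h x = t} ∩ (i : Set ℝ)) := by
          rw [hA]; exact measure_iUnion hdisj' hAmeas
      _ = ∑' i : ↥C, (h '' (i : Set ℝ)).indicator (fun _ => (1 : ℝ≥0∞)) t :=
          tsum_congr hcnt
  -- left-hand side
  have hInt : IntegrableOn (fun x => |h' x|) (Set.Ioc 0 L) :=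
    (hc.abs.integrableOn_Icc).mono_set Set.Ioc_subset_Icc_self
  have hlhs : ENNReal.ofReal (∫ x in (0:ℝ)..L, |h' x|)
      = ∫⁻ x in Set.Ioo 0 L, ENNReal.ofReal |h' x| := by
    rw [intervalIntegral.integral_of_le hL.le,
      ofReal_integral_eq_lintegral_ofReal hInt
        (Filter.Eventually.of_forall fun x => abs_nonneg _),
      ← Measure.restrict_congr_set Ioo_ae_eq_Ioc]
  -- splitting the domain
  have hsplit : ∫⁻ x in Set.Ioo 0 L, ENNReal.ofReal |h' x|
      = ∫⁻ x in U, ENNReal.ofReal |h' x| := by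
    have hIooUZ : Set.Ioo 0 L = U ∪ Z := by
      ext x
      simp only [hUdef, hZdef, Set.mem_union, Set.mem_setOf_eq]
      tauto
    rw [hIooUZ, lintegral_union hZmeas]
    · have : ∫⁻ x in Z, ENNReal.ofReal |h' x| = 0 := by
        rw [setLIntegral_congr_fun_ae hZmeas
          (Filter.Eventually.of_forall (fun x hx => by
            show ENNReal.ofReal |h' x| = 0
            rw [hx.2]; simp))]
        simp
      rw [this, add_zero]
    · rw [Set.disjoint_left]
      rintro x ⟨_, hx2⟩ ⟨_, hx0⟩
      exact hx2 hx0
  rw [hlhs, hsplit]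
  -- main computation
  have hae : ∀ᵐ t : ℝ, t ∉ h '' Z := by
    rw [ae_iff]
    simpa only [not_not, Set.setOf_mem_eq] using himZ
  calc ∫⁻ x in U, ENNReal.ofReal |h' x|
      = ∫⁻ x in ⋃ i : ↥C, (i : Set ℝ), ENNReal.ofReal |h' x| := by rw [hunion]
    _ = ∑' i : ↥C, ∫⁻ x in (i : Set ℝ), ENNReal.ofReal |h' x| :=
        lintegral_iUnion (fun i => (hopen _ i.2).measurableSet)
          (fun i j hne => hdisjC i j hne) _
    _ = ∑' i : ↥C, volume (h '' (i : Set ℝ)) := by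
        exact tsum_congr fun i => (hvol _ i.2).symm
    _ = ∑' i : ↥C, ∫⁻ t : ℝ, (h '' (i : Set ℝ)).indicator (fun _ => (1 : ℝ≥0∞)) t := by
        refine tsum_congr fun i => ?_
        rw [lintegral_indicator (himg _ i.2)]
        simp
    _ = ∫⁻ t : ℝ, ∑' i : ↥C, (h '' (i : Set ℝ)).indicator (fun _ => (1 : ℝ≥0∞)) t :=
        (lintegral_tsum fun i =>
          ((measurable_const.indicator (himg _ i.2)).aemeasurable)).symm
    _ = ∫⁻ t : ℝ,
        ((frontier {x : ℝ | x ∈ Set.Icc 0 L ∧ t < h x} ∩ Set.Ioo 0 L).encard : ℝ≥0∞) := by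
        refine lintegral_congr_ae ?_
        filter_upwards [hae] with t ht
        rw [hfr t ht, hcount t]
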